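/- Let V : [0,∞) → ℝ be continuous, σ, λ, η ∈ ℝ with η ≠ λ, and let φ : [0,∞) → ℝ be twice continuously differentiable with φ(x) > 0 for all x ≥ 0, satisfying −φ'' + Vφ = λφ on [0,∞) and φ'(0) = σφ(0). Define V_λ(x) = V(x) − 2(d²/dx²) log φ(x). If ψ : [0,∞) → ℝ is twice continuously differentiable and satisfies −ψ'' + Vψ = ηψ on [0,∞) and ψ'(0) = σψ(0), then the function u(x) = −ψ'(x) + (φ'(x)/φ(x))ψ(x) is twice continuously differentiable and satisfies −u'' + V_λ u = ηu on [0,∞) and u(0) = 0. -/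

import Mathlib

open MeasureTheory Set

/-- One-sided derivative on `[0, ∞)`. -/
noncomputable def D (f : ℝ → ℝ) : ℝ → ℝ := derivWithin f (Set.Ici 0)

/-- **Single commutation method**: if `φ > 0` solves `-φ'' + Vφ = λφ` with Robin boundary
condition `φ'(0) = σφ(0)` and `ψ` solves `-ψ'' + Vψ = ηψ` with the same boundary condition,
then `u = -ψ' + (φ'/φ)ψ` solves `-u'' + V_λ u = ηu` with Dirichlet boundary condition,
where `V_λ = V - 2 (log φ)''`. -/
theorem single_commutation
    (V φ ψ : ℝ → ℝ) (σ lam η : ℝ) (hne : η ≠ lam)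
    (hV : ContinuousOn V (Set.Ici 0))
    (hφ : ContDiffOn ℝ 2 φ (Set.Ici 0))
    (hφpos : ∀ x ∈ Set.Ici (0:ℝ), 0 < φ x)
    (hφode : ∀ x ∈ Set.Ici (0:ℝ), -(D (D φ) x) + V x * φ x = lam * φ x)
    (hφbc : D φ 0 = σ * φ 0)
    (hψ : ContDiffOn ℝ 2 ψ (Set.Ici 0))
    (hψode : ∀ x ∈ Set.Ici (0:ℝ), -(D (D ψ) x) + V x * ψ x = η * ψ x)
    (hψbc : D ψ 0 = σ * ψ 0)
    (Vlam : ℝ → ℝ) (hVlam : ∀ x ∈ Set.Ici (0:ℝ),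
      Vlam x = V x - 2 * D (D (fun y => Real.log (φ y))) x)
    (u : ℝ → ℝ) (hu : ∀ x ∈ Set.Ici (0:ℝ),
      u x = -(D ψ x) + (D φ x / φ x) * ψ x) :
    ContDiffOn ℝ 2 u (Set.Ici 0) ∧
      (∀ x ∈ Set.Ici (0:ℝ), -(D (D u) x) + Vlam x * u x = η * u x) ∧
      u 0 = 0 := by
  have hs : UniqueDiffOn ℝ (Set.Ici (0:ℝ)) := uniqueDiffOn_Ici 0
  have hφne : ∀ x ∈ Set.Ici (0:ℝ), φ x ≠ 0 := fun x hx => (hφpos x hx).ne'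
  have hφ1 : ContDiffOn ℝ 1 φ (Set.Ici 0) := hφ.of_le (by norm_num)
  have hψ1 : ContDiffOn ℝ 1 ψ (Set.Ici 0) := hψ.of_le (by norm_num)
  have hDφ1 : ContDiffOn ℝ 1 (D φ) (Set.Ici 0) := hφ.derivWithin hs (by norm_num)
  have hDψ1 : ContDiffOn ℝ 1 (D ψ) (Set.Ici 0) := hψ.derivWithin hs (by norm_num)
  have hφd : ∀ x ∈ Set.Ici (0:ℝ), HasDerivWithinAt φ (D φ x) (Set.Ici 0) x :=
    fun x hx => ((hφ1.differentiableOn one_ne_zero) x hx).hasDerivWithinAt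
  have hψd : ∀ x ∈ Set.Ici (0:ℝ), HasDerivWithinAt ψ (D ψ x) (Set.Ici 0) x :=
    fun x hx => ((hψ1.differentiableOn one_ne_zero) x hx).hasDerivWithinAt
  have hDφd : ∀ x ∈ Set.Ici (0:ℝ), HasDerivWithinAt (D φ) (D (D φ) x) (Set.Ici 0) x :=
    fun x hx => ((hDφ1.differentiableOn one_ne_zero) x hx).hasDerivWithinAt
  have hDψd : ∀ x ∈ Set.Ici (0:ℝ), HasDerivWithinAt (D ψ) (D (D ψ) x) (Set.Ici 0) x :=
    fun x hx => ((hDψ1.differentiableOn one_ne_zero) x hx).hasDerivWithinAt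
  -- quotient rule for w = Dφ/φ
  have hwd : ∀ x ∈ Set.Ici (0:ℝ), HasDerivWithinAt (fun y => D φ y / φ y)
      ((D (D φ) x * φ x - D φ x * D φ x) / φ x ^ 2) (Set.Ici 0) x :=
    fun x hx => (hDφd x hx).div (hφd x hx) (hφne x hx)
  -- the function g
  set g : ℝ → ℝ := fun y => -(D ψ y) + (D φ y / φ y) * ψ y with hgdef
  have hg1 : ContDiffOn ℝ 1 g (Set.Ici 0) :=
    (hDψ1.neg).add ((hDφ1.div hφ1 hφne).mul hψ1)
  have hgd : ∀ x ∈ Set.Ici (0:ℝ), HasDerivWithinAt g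
      (-(D (D ψ) x) + ((D (D φ) x * φ x - D φ x * D φ x) / φ x ^ 2 * ψ x
        + D φ x / φ x * D ψ x)) (Set.Ici 0) x :=
    fun x hx => ((hDψd x hx).neg).add ((hwd x hx).mul (hψd x hx))
  have hkey : ∀ x ∈ Set.Ici (0:ℝ), HasDerivWithinAt g
      ((η - lam) * ψ x - D φ x / φ x * g x) (Set.Ici 0) x := by
    intro x hx
    have e1 : D (D ψ) x = V x * ψ x - η * ψ x := by linarith [hψode x hx]
    have e2 : D (D φ) x = V x * φ x - lam * φ x := by linarith [hφode x hx]
    have h0 := hgd x hx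
    rw [e1, e2] at h0
    convert h0 using 1
    have ha := hφne x hx
    rw [hgdef]
    field_simp
    ring
  have hDg_eq : ∀ x ∈ Set.Ici (0:ℝ),
      derivWithin g (Set.Ici 0) x = (η - lam) * ψ x - D φ x / φ x * g x :=
    fun x hx => (hkey x hx).derivWithin (hs x hx)
  have hh1 : ContDiffOn ℝ 1 (fun y => (η - lam) * ψ y - D φ y / φ y * g y) (Set.Ici 0) :=
    (contDiffOn_const.mul hψ1).sub ((hDφ1.div hφ1 hφne).mul hg1)
  have hg2 : ContDiffOn ℝ 2 g (Set.Ici 0) := by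
    have h21 : (2 : WithTop ℕ∞) = 1 + 1 := by norm_num
    rw [h21]
    refine (contDiffOn_succ_iff_derivWithin hs).2
      ⟨hg1.differentiableOn one_ne_zero, ?_, hh1.congr hDg_eq⟩
    intro h
    exact absurd h (by simp)
  have hu2 : ContDiffOn ℝ 2 u (Set.Ici 0) := hg2.congr hu
  -- D u = h on Ici 0
  have hDu : ∀ y ∈ Set.Ici (0:ℝ), D u y = (η - lam) * ψ y - D φ y / φ y * g y := by
    intro y hy
    show derivWithin u (Set.Ici 0) y = _
    rw [derivWithin_congr (fun z hz => hu z hz) (hu y hy)]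
    exact hDg_eq y hy
  -- derivative of h
  have hhd : ∀ x ∈ Set.Ici (0:ℝ), HasDerivWithinAt (fun y => (η - lam) * ψ y - D φ y / φ y * g y)
      ((η - lam) * D ψ x - ((D (D φ) x * φ x - D φ x * D φ x) / φ x ^ 2 * g x
        + D φ x / φ x * ((η - lam) * ψ x - D φ x / φ x * g x))) (Set.Ici 0) x :=
    fun x hx => ((hψd x hx).const_mul (η - lam)).sub ((hwd x hx).mul (hkey x hx))
  -- log derivative
  have hLd : ∀ x ∈ Set.Ici (0:ℝ), HasDerivWithinAt (fun y => Real.log (φ y))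
      (D φ x / φ x) (Set.Ici 0) x := by
    intro x hx
    have := (Real.hasDerivAt_log (hφne x hx)).comp_hasDerivWithinAt x (hφd x hx)
    rw [div_eq_inv_mul]
    exact this
  have hDL : ∀ y ∈ Set.Ici (0:ℝ), D (fun y => Real.log (φ y)) y = D φ y / φ y :=
    fun y hy => (hLd y hy).derivWithin (hs y hy)
  have hDDL : ∀ x ∈ Set.Ici (0:ℝ), D (D (fun y => Real.log (φ y))) x =
      (D (D φ) x * φ x - D φ x * D φ x) / φ x ^ 2 := by
    intro x hx
    show derivWithin (D (fun y => Real.log (φ y))) (Set.Ici 0) x = _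
    rw [derivWithin_congr (fun z hz => hDL z hz) (hDL x hx)]
    exact (hwd x hx).derivWithin (hs x hx)
  refine ⟨hu2, ?_, ?_⟩
  · intro x hx
    have e1 : D (D ψ) x = V x * ψ x - η * ψ x := by linarith [hψode x hx]
    have e2 : D (D φ) x = V x * φ x - lam * φ x := by linarith [hφode x hx]
    have ha := hφne x hx
    have hDDu : D (D u) x = (η - lam) * D ψ x -
        ((D (D φ) x * φ x - D φ x * D φ x) / φ x ^ 2 * g x
          + D φ x / φ x * ((η - lam) * ψ x - D φ x / φ x * g x)) := by
      show derivWithin (D u) (Set.Ici 0) x = _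
      rw [derivWithin_congr (fun z hz => hDu z hz) (hDu x hx)]
      exact (hhd x hx).derivWithin (hs x hx)
    rw [hDDu, hVlam x hx, hDDL x hx, hu x hx]
    rw [show (-(D ψ x) + D φ x / φ x * ψ x) = g x by rw [hgdef]]
    rw [hgdef]
    simp only []
    rw [e2]
    field_simp
    ring
  · have h0 : (0:ℝ) ∈ Set.Ici (0:ℝ) := Set.self_mem_Ici
    rw [hu 0 h0, hψbc, hφbc]
    have := hφne 0 h0
    field_simp
    ring
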